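/- If G is an ancestral graph satisfying the boundary containment property and π is a path of minimal length among all paths m-connecting v and w given C, then every non-endpoint vertex on π is a collider on π. -/

import Mathlib

/-- Possible edge types between an ordered pair of distinct vertices of a
simple mixed graph.  `arrowTo` at `(v, w)` means `v → w`, `arrowFrom` means
`v ← w`, `undir` means `v − w` and `bidir` means `v ↔ w`. -/
inductive EType : Type
  | none | undir | arrowTo | arrowFrom | bidir
deriving DecidableEq

/-- The edge type seen from the reversed ordered pair of vertices. -/
def EType.mirror : EType → EType
  | .none => .none
  | .undir => .undir
  | .arrowTo => .arrowFrom
  | .arrowFrom => .arrowTo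
  | .bidir => .bidir

/-- A simple mixed graph: at most one edge (undirected, directed or
bi-directed) between any two distinct vertices, and no self loops. -/
structure MixedGraph (V : Type) where
  E : V → V → EType
  no_loop : ∀ v, E v v = .none
  symm : ∀ v w, E w v = (E v w).mirror

/-- `(a, b, c)` are three consecutive vertices on the path `p`. -/
def ConsecTriple {V : Type} (p : List V) (a b c : V) : Prop :=
  ∃ l1 l2, p = l1 ++ a :: b :: c :: l2

namespace MixedGraph

variable {V : Type} (G : MixedGraph V)

/-- `v − w` is an edge of `G`. -/
def Undir (v w : V) : Prop := G.E v w = .undir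

/-- `v → w` is an edge of `G`. -/
def Dir (v w : V) : Prop := G.E v w = .arrowTo

/-- `v ↔ w` is an edge of `G`. -/
def Bidir (v w : V) : Prop := G.E v w = .bidir

/-- `v` and `w` are adjacent (joined by some edge). -/
def Adj (v w : V) : Prop := G.E v w ≠ .none

/-- The edge between `a` and `b` has an arrowhead at `b`. -/
def HeadAt (a b : V) : Prop := G.E a b = .arrowTo ∨ G.E a b = .bidir

/-- Closed boundary: `v` together with its adjacent vertices. -/
def Bd (v : V) : Set V := insert v {w | G.Adj v w}

/-- A set of vertices is complete if all of its pairs of distinct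
vertices are adjacent. -/
def Complete (S : Set V) : Prop := ∀ v ∈ S, ∀ w ∈ S, v ≠ w → G.Adj v w

/-- A vertex is simplicial if its closed boundary is complete. -/
def Simplicial (v : V) : Prop := G.Complete (G.Bd v)

/-- `v` is an ancestor of `w`: `v = w` or there is a directed path from
`v` to `w`. -/
def Anc (v w : V) : Prop := Relation.ReflTransGen G.Dir v w

/-- The set of ancestors of vertices in `C`. -/
def anSet (C : Set V) : Set V := {v | ∃ c ∈ C, G.Anc v c}

/-- `G` is an ancestral graph. -/
def Ancestral : Prop :=
  (∀ v w, G.Dir v w → ¬ G.Anc w v) ∧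
  (∀ v w, G.Undir v w → ∀ u, ¬ G.HeadAt u v) ∧
  (∀ v w, G.Bidir v w → ¬ G.Anc v w)

/-- The boundary containment property. -/
def BdContain : Prop :=
  (∀ v w, G.Undir v w → G.Bd v = G.Bd w) ∧
  (∀ v w, G.Dir v w → G.Bd v ⊆ G.Bd w)

/-- `b` is a collider between consecutive neighbours `a` and `c`. -/
def Collider (a b c : V) : Prop := G.HeadAt a b ∧ G.HeadAt c b

/-- A path: a list of distinct vertices, consecutive ones adjacent. -/
def IsPath (p : List V) : Prop := p.Nodup ∧ p.Chain' G.Adj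

/-- `p` is an m-connecting path given `C`: every non-collider on it is
outside `C` and every collider on it is an ancestor of `C`. -/
def IsMConnPath (C : Set V) (p : List V) : Prop :=
  G.IsPath p ∧
  ∀ a b c, ConsecTriple p a b c →
    (G.Collider a b c → b ∈ G.anSet C) ∧ (¬ G.Collider a b c → b ∉ C)

/-- `v` and `w` are m-connected given `C`. -/
def MConn (v w : V) (C : Set V) : Prop :=
  ∃ p, G.IsMConnPath C p ∧ p.head? = some v ∧ p.getLast? = some w

/-- `v` and `w` are m-separated given `C`. -/
def MSep (v w : V) (C : Set V) : Prop := ¬ G.MConn v w C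

/-- A maximal (ancestral) graph: every pair of distinct non-adjacent
vertices is m-separated given some set. -/
def Maximal : Prop :=
  ∀ v w, v ≠ w → ¬ G.Adj v w → ∃ C : Set V, v ∉ C ∧ w ∉ C ∧ G.MSep v w C

/-- `G` is a bi-directed graph. -/
def Bidirected : Prop := ∀ v w, G.E v w = .none ∨ G.E v w = .bidir

/-- `G` is an undirected graph. -/
def UndirectedG : Prop := ∀ v w, G.E v w = .none ∨ G.E v w = .undir

/-- `G` is a directed acyclic graph. -/
def IsDAG : Prop :=
  (∀ v w, G.E v w = .none ∨ G.E v w = .arrowTo ∨ G.E v w = .arrowFrom) ∧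
  (∀ v w, G.Dir v w → ¬ G.Anc w v)

/-- `G` and `H` have the same skeleton. -/
def SameSkeleton (H : MixedGraph V) : Prop := ∀ v w, G.Adj v w ↔ H.Adj v w

/-- `G` and `H` are Markov equivalent: their m-separation relations
coincide. -/
def MarkovEquiv (H : MixedGraph V) : Prop :=
  ∀ v w (C : Set V), v ≠ w → v ∉ C → w ∉ C → (G.MSep v w C ↔ H.MSep v w C)

open Classical in
/-- The edge map obtained from `G` by dropping all arrowheads at
simplicial vertices. -/
noncomputable def dropE (v w : V) : EType :=
  match G.E v w with
  | .none => .none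
  | .undir => .undir
  | .arrowTo => if G.Simplicial w then .undir else .arrowTo
  | .arrowFrom => if G.Simplicial v then .undir else .arrowFrom
  | .bidir =>
      if G.Simplicial v then (if G.Simplicial w then .undir else .arrowTo)
      else (if G.Simplicial w then .arrowFrom else .bidir)

/-- The graph obtained from `G` by dropping all arrowheads at simplicial
vertices; for a bi-directed graph `G` this is the simplicial graph `Gˢ`. -/
noncomputable def drop : MixedGraph V where
  E := G.dropE
  no_loop v := by simp [dropE, G.no_loop]
  symm v w := by
    unfold dropE
    rw [G.symm v w]
    cases h : G.E v w <;>
      simp only [EType.mirror] <;> split_ifs <;> simp_all [EType.mirror]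

open Classical in
/-- The edge map of the minimally oriented graph `G^min_<`: starting from
the simplicial graph, each bi-directed edge `v ↔ w` with `Bd v ⊆ Bd w`
and `v < w` is replaced by `v → w`. -/
noncomputable def gminE [LinearOrder V] (v w : V) : EType :=
  match G.dropE v w with
  | .bidir =>
      if G.Bd v ⊆ G.Bd w ∧ v < w then .arrowTo
      else if G.Bd w ⊆ G.Bd v ∧ w < v then .arrowFrom
      else .bidir
  | e => e

/-- The graph `G^min_<` produced by Algorithm 4.2 from `G` and the total
order on `V`. -/
noncomputable def gmin [LinearOrder V] : MixedGraph V where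
  E := G.gminE
  no_loop v := by
    have h := G.drop.no_loop v
    simp only [drop] at h
    simp [gminE, h]
  symm v w := by
    have h := G.drop.symm v w
    simp only [drop] at h
    unfold gminE
    rw [h]
    cases hE : G.dropE v w <;> simp only [EType.mirror]
    case bidir =>
      by_cases c1 : G.Bd v ⊆ G.Bd w ∧ v < w
      · have c2 : ¬ (G.Bd w ⊆ G.Bd v ∧ w < v) := fun h' => lt_asymm c1.2 h'.2
        simp [c1, c2, EType.mirror]
      · by_cases c2 : G.Bd w ⊆ G.Bd v ∧ w < v
        · simp [c1, c2, EType.mirror]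
        · simp [c1, c2, EType.mirror]

/-- Total number of arrowheads of `G`: the number of directed edges plus
twice the number of bi-directed edges. -/
noncomputable def arr : ℕ :=
  {p : V × V | G.Dir p.1 p.2}.ncard + {p : V × V | G.Bidir p.1 p.2}.ncard

end MixedGraph

/-- `Gm` is a minimally oriented graph for `G`. -/
def MinOriented {V : Type} (G Gm : MixedGraph V) : Prop :=
  Gm.Ancestral ∧ Gm.Maximal ∧ G.MarkovEquiv Gm ∧
  ∀ H : MixedGraph V, H.Ancestral → H.Maximal → G.MarkovEquiv H → Gm.arr ≤ H.arr


section Aux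

namespace MixedGraph

variable {V : Type} {G : MixedGraph V}

lemma mirror_none_iff {e : EType} : e.mirror = .none ↔ e = .none := by
  cases e <;> simp [EType.mirror]

lemma adj_symm {v w : V} (h : G.Adj v w) : G.Adj w v := by
  unfold Adj at *
  rw [G.symm]
  simpa [mirror_none_iff] using h

lemma undir_symm {v w : V} (h : G.Undir v w) : G.Undir w v := by
  unfold Undir at *
  rw [G.symm, h]
  rfl

lemma bidir_symm {v w : V} (h : G.Bidir v w) : G.Bidir w v := by
  unfold Bidir at *
  rw [G.symm, h]
  rfl

lemma dir_headAt {v w : V} (h : G.Dir v w) : G.HeadAt v w := Or.inl h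

lemma not_headAt_cases {s t : V} (hadj : G.Adj s t) (h : ¬ G.HeadAt s t) :
    G.Undir s t ∨ G.Dir t s := by
  have hm := G.symm s t
  unfold Adj at hadj
  unfold HeadAt at h
  unfold Undir Dir
  rw [hm]
  cases hE : G.E s t <;> simp_all [EType.mirror]

lemma forced_dir (hA : G.Ancestral) {s t u : V} (hadj : G.Adj s t)
    (hno : ¬ G.HeadAt t s) (hhead : G.HeadAt u s) : G.Dir s t := by
  rcases not_headAt_cases (adj_symm hadj) hno with h | h
  · exact absurd hhead (hA.2.1 s t (undir_symm h) u)
  · exact h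

lemma headAt_anc_absurd (hA : G.Ancestral) {s t : V} (h : G.HeadAt t s)
    (hanc : G.Anc s t) : False := by
  rcases h with h | h
  · exact hA.1 t s h hanc
  · exact hA.2.2 s t (bidir_symm h) hanc

lemma mem_bd_of_adj {s u : V} (h : G.Adj s u) : u ∈ G.Bd s :=
  Set.mem_insert_iff.mpr (Or.inr h)

lemma adj_of_mem_bd {t u : V} (h : u ∈ G.Bd t) (hne : u ≠ t) : G.Adj t u := by
  rcases Set.mem_insert_iff.mp h with h | h
  · exact absurd h hne
  · exact h

lemma bd_subset_of_not_headAt (hB : G.BdContain) {s t : V} (hadj : G.Adj s t)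
    (h : ¬ G.HeadAt s t) : G.Bd t ⊆ G.Bd s := by
  rcases not_headAt_cases hadj h with h' | h'
  · exact (hB.1 s t h').symm.subset
  · exact hB.2 t s h'

lemma mem_anSet_of_dir_mem {C : Set V} {s m : V} (hd : G.Dir s m) (h : m ∈ C) :
    s ∈ G.anSet C := ⟨m, h, Relation.ReflTransGen.single hd⟩

lemma adj_of_chain {p X Y : List V} {α β : V} (hc : p.Chain' G.Adj)
    (h : p = X ++ α :: β :: Y) : G.Adj α β := by
  subst h
  have h2 : [α, β] <:+: X ++ α :: β :: Y := ⟨X, Y, by simp⟩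
  exact List.isChain_pair.mp (hc.infix h2)

lemma ne_of_nodup_right {X Y : List V} {α β : V} (h : (X ++ α :: Y).Nodup)
    (hβ : β ∈ Y) : α ≠ β := by
  have h2 : (α :: Y).Nodup := (List.nodup_append.mp h).2.1
  rintro rfl
  exact (List.nodup_cons.mp h2).1 hβ

lemma head?_append_cons (l : List V) (a : V) (x y : List V) :
    (l ++ a :: x).head? = (l ++ a :: y).head? := by
  cases l <;> simp

lemma getLast?_append_cons (l : List V) (a : V) (x : List V) :
    (l ++ a :: x).getLast? = (a :: x).getLast? := by
  rw [List.getLast?_append]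
  cases h : (a :: x).getLast? with
  | none => simp at h
  | some y => simp

lemma concat_inj {l m : List V} {x y : V} (h : l ++ [x] = m ++ [y]) :
    l = m ∧ x = y := by
  obtain ⟨h1, h2⟩ := List.append_inj' h rfl
  exact ⟨h1, by simpa using h2⟩

lemma triple_split {A B X Y : List V} {α β γ : V}
    (h : A ++ B = X ++ α :: β :: γ :: Y) :
    (∃ Z, A = X ++ α :: β :: γ :: Z) ∨
    (A = X ++ [α, β] ∧ B = γ :: Y) ∨
    (A = X ++ [α] ∧ B = β :: γ :: Y) ∨
    (∃ Z, B = Z ++ α :: β :: γ :: Y ∧ X = A ++ Z) := by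
  rcases List.append_eq_append_iff.mp h with ⟨Z, hZ1, hZ2⟩ | ⟨Z, hZ1, hZ2⟩
  · exact Or.inr (Or.inr (Or.inr ⟨Z, hZ2, hZ1⟩))
  · rcases Z with _ | ⟨x, _ | ⟨y, _ | ⟨z, Z⟩⟩⟩
    · refine Or.inr (Or.inr (Or.inr ⟨[], ?_, ?_⟩)) <;> simp_all
    · simp only [List.cons_append, List.nil_append, List.cons.injEq] at hZ2
      obtain ⟨rfl, hBeq⟩ := hZ2
      exact Or.inr (Or.inr (Or.inl ⟨hZ1, hBeq.symm⟩))
    · simp only [List.cons_append, List.nil_append, List.cons.injEq] at hZ2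
      obtain ⟨rfl, rfl, hBeq⟩ := hZ2
      exact Or.inr (Or.inl ⟨hZ1, hBeq.symm⟩)
    · simp only [List.cons_append, List.cons.injEq] at hZ2
      obtain ⟨rfl, rfl, rfl, hYeq⟩ := hZ2
      exact Or.inl ⟨Z, hZ1⟩

lemma core (hA : G.Ancestral) (hB : G.BdContain) {C : Set V}
    {p l1 : List V} {a b c : V} {l2 : List V}
    (hpm : G.IsMConnPath C p) (hpeq : p = l1 ++ a :: b :: c :: l2)
    (hbl : G.Dir a b → G.Dir b c) (hbr : G.Dir c b → G.Dir b a) :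
    ∀ n (p1 : List V) (s : V) (mid : List V) (t : V) (p2 : List V),
      p1.length + p2.length = n →
      p = p1 ++ s :: (mid ++ t :: p2) →
      mid ≠ [] →
      G.Adj s t →
      (∀ m1 mid', mid = m1 :: mid' →
        m1 ∈ C ∨ (m1 = b ∧ p1 ++ [s] = l1 ++ [a] ∧ (t :: p2 = c :: l2 ∨ G.Dir c a))) →
      (∀ mlast, mid.getLast? = some mlast →
        mlast ∈ C ∨ (mlast = b ∧ t :: p2 = c :: l2 ∧ (p1 ++ [s] = l1 ++ [a] ∨ G.Dir a c))) →
      ∃ q, G.IsMConnPath C q ∧ q.head? = p.head? ∧ q.getLast? = p.getLast? ∧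
        q.length < p.length := by
  intro n
  induction n using Nat.strong_induction_on with
  | _ n IH =>
  intro p1 s mid t p2 hn hsp hmidne hadj hIL hIR
  obtain ⟨nd, ch⟩ := hpm.1
  obtain ⟨m1, mid', rfl⟩ : ∃ m1 mid', mid = m1 :: mid' := by
    cases mid with
    | nil => exact absurd rfl hmidne
    | cons x xs => exact ⟨x, xs, rfl⟩
  obtain ⟨mid'', mlast, hmid2⟩ : ∃ mid'' mlast, m1 :: mid' = mid'' ++ [mlast] := by
    rcases List.eq_nil_or_concat (m1 :: mid') with h | ⟨L, z, hL⟩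
    · simp at h
    · exact ⟨L, z, by simpa using hL⟩
  have hadj_sm1 : G.Adj s m1 :=
    adj_of_chain ch (X := p1) (Y := mid' ++ t :: p2) (by rw [hsp]; simp)
  have hadj_mlast_t : G.Adj mlast t :=
    adj_of_chain ch (X := p1 ++ s :: mid'') (Y := p2) (by rw [hsp, hmid2]; simp)
  by_cases hgs : ∀ s' p1', p1 = p1' ++ [s'] →
      (G.Collider s' s t → s ∈ G.anSet C) ∧ (¬ G.Collider s' s t → s ∉ C)
  · by_cases hgt : ∀ t' p2', p2 = t' :: p2' →
        (G.Collider s t t' → t ∈ G.anSet C) ∧ (¬ G.Collider s t t' → t ∉ C)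
    · -- both junction checks pass: assemble the shorter path
      refine ⟨(p1 ++ [s]) ++ t :: p2, ⟨⟨?_, ?_⟩, ?_⟩, ?_, ?_, ?_⟩
      · -- Nodup
        have hsub : List.Sublist ((p1 ++ [s]) ++ t :: p2)
            ((p1 ++ [s]) ++ ((m1 :: mid') ++ t :: p2)) :=
          (List.sublist_append_right (m1 :: mid') (t :: p2)).append_left _
        have hnd2 : ((p1 ++ [s]) ++ ((m1 :: mid') ++ t :: p2)).Nodup := by
          rw [show (p1 ++ [s]) ++ ((m1 :: mid') ++ t :: p2)
              = p1 ++ s :: (m1 :: mid' ++ t :: p2) by simp, ← hsp]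
          exact nd
        exact hnd2.sublist hsub
      · -- Chain'
        apply List.isChain_append.mpr
        refine ⟨?_, ?_, ?_⟩
        · exact ch.infix ⟨[], (m1 :: mid') ++ t :: p2, by rw [hsp]; simp⟩
        · exact ch.infix ⟨p1 ++ s :: (m1 :: mid'), [], by rw [hsp]; simp⟩
        · intro x hx y hy
          simp only [List.getLast?_concat, Option.mem_def, Option.some.injEq] at hx
          simp only [List.head?_cons, Option.mem_def, Option.some.injEq] at hy
          rw [← hx, ← hy] at *
          exact hadj
      · -- triples
        rintro α β γ ⟨X, Y, hXY⟩
        rcases triple_split hXY with ⟨Z, hZ⟩ | ⟨h1, h2⟩ | ⟨h1, h2⟩ | ⟨Z, hZ1, hZ2⟩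
        · exact hpm.2 α β γ ⟨X, Z ++ ((m1 :: mid') ++ t :: p2),
            by rw [hsp, show p1 ++ s :: (m1 :: mid' ++ t :: p2)
                = (p1 ++ [s]) ++ ((m1 :: mid') ++ t :: p2) by simp, hZ]; simp⟩
        · injection h2 with u1 u2
          subst u1
          subst u2
          obtain ⟨hp1, hsb⟩ := concat_inj (show p1 ++ [s] = (X ++ [α]) ++ [β] by
            rw [h1]; simp)
          rw [← hsb]
          exact hgs α X hp1
        · injection h2 with u1 u2
          subst u1
          subst u2
          obtain ⟨hp1, hsa⟩ := concat_inj h1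
          rw [← hsa]
          exact hgt γ Y rfl
        · exact hpm.2 α β γ ⟨(p1 ++ [s]) ++ ((m1 :: mid') ++ Z), Y,
            by rw [hsp, show p1 ++ s :: (m1 :: mid' ++ t :: p2)
                = (p1 ++ [s]) ++ ((m1 :: mid') ++ (t :: p2)) by simp, hZ1]; simp⟩
      · rw [hsp]
        simpa using head?_append_cons p1 s (t :: p2) (m1 :: mid' ++ t :: p2)
      · rw [hsp, getLast?_append_cons (p1 ++ [s]) t p2,
          show p1 ++ s :: (m1 :: mid' ++ t :: p2)
            = (p1 ++ s :: (m1 :: mid')) ++ t :: p2 by simp,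
          getLast?_append_cons]
      · rw [hsp]
        simp only [List.length_append, List.length_cons, List.length_nil]
        omega
    · -- right junction fails: absorb t into the deleted block
      simp only [not_forall] at hgt
      obtain ⟨t', p2', hp2, hbad⟩ := hgt
      have ptripT := hpm.2 mlast t t' ⟨p1 ++ s :: mid'', p2',
        by rw [hsp, hmid2, hp2]; simp⟩
      have hadj_tt' : G.Adj t t' :=
        adj_of_chain ch (X := p1 ++ s :: (m1 :: mid')) (Y := p2') (by rw [hsp, hp2]; simp)
      have hmidlast : (m1 :: mid').getLast? = some mlast := by
        rw [hmid2, List.getLast?_concat]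
      by_cases h1 : G.HeadAt t' t
      · by_cases h2 : G.HeadAt s t
        · by_cases h3 : G.HeadAt mlast t
          · exact (hbad ⟨fun _ => ptripT.1 ⟨h3, h1⟩, fun hn => absurd ⟨h2, h1⟩ hn⟩).elim
          · have hdtm : G.Dir t mlast := forced_dir hA (adj_symm hadj_mlast_t) h3 h1
            have htan : t ∈ G.anSet C := by
              rcases hIR mlast hmidlast with hm | ⟨hmb, hceq, hco⟩
              · exact mem_anSet_of_dir_mem hdtm hm
              · exfalso
                injection hceq with u1 u2
                have hcb : G.Dir c b := by rw [← u1, ← hmb]; exact hdtm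
                have hba := hbr hcb
                have hanc : G.Anc c a :=
                  Relation.ReflTransGen.head hcb (Relation.ReflTransGen.single hba)
                rcases hco with hpa | hdac
                · obtain ⟨_, hsa⟩ := concat_inj hpa
                  have h2' : G.HeadAt a c := by rw [← hsa, ← u1]; exact h2
                  exact headAt_anc_absurd hA h2' hanc
                · exact headAt_anc_absurd hA (dir_headAt hdac) hanc
            exact (hbad ⟨fun _ => htan, fun hn => absurd ⟨h2, h1⟩ hn⟩).elim
        · by_cases h3 : G.HeadAt mlast t
          · by_cases h4 : t ∈ C
            · -- genuine failure: recurse, deleting t as well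
              have hdts : G.Dir t s := forced_dir hA (adj_symm hadj) h2 h1
              have hadj_st' : G.Adj s t' := by
                have h5 : t' ∈ G.Bd s := hB.2 t s hdts (mem_bd_of_adj hadj_tt')
                have hne : s ≠ t' := by
                  refine ne_of_nodup_right (X := p1) (Y := (m1 :: mid') ++ t :: t' :: p2')
                    ?_ (by simp)
                  rw [show p1 ++ s :: (m1 :: mid' ++ t :: t' :: p2')
                      = p1 ++ s :: ((m1 :: mid') ++ t :: t' :: p2') by simp, ← hp2, ← hsp]
                  exact nd
                exact adj_of_mem_bd h5 (Ne.symm hne)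
              refine IH (p1.length + p2'.length) (by rw [← hn, hp2]; simp) p1 s
                ((m1 :: mid') ++ [t]) t' p2' rfl (by rw [hsp, hp2]; simp) (by simp) hadj_st'
                ?_ ?_
              · intro x xs hx
                have hx1 : x = m1 := by
                  rw [List.cons_append] at hx
                  injection hx with u1 u2
                  exact u1.symm
                subst hx1
                rcases hIL x mid' rfl with hm | ⟨hmb, hpa, hco⟩
                · exact Or.inl hm
                · refine Or.inr ⟨hmb, hpa, Or.inr ?_⟩
                  rcases hco with hceq | hdca
                  · injection hceq with u1 u2
                    obtain ⟨_, hsa⟩ := concat_inj hpa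
                    rw [← hsa, ← u1]
                    exact hdts
                  · exact hdca
              · intro ml hml
                rw [List.getLast?_concat] at hml
                injection hml with u
                exact Or.inl (u ▸ h4)
            · exact (hbad ⟨fun hco => absurd hco.1 h2, fun _ => h4⟩).elim
          · have hnc : t ∉ C := ptripT.2 (fun hco => absurd hco.1 h3)
            exact (hbad ⟨fun hco => absurd hco.1 h2, fun _ => hnc⟩).elim
      · exact (hbad ⟨fun hco => absurd hco.2 h1,
          fun _ => ptripT.2 (fun hco => absurd hco.2 h1)⟩).elim
  · -- left junction fails: absorb s into the deleted block
    simp only [not_forall] at hgs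
    obtain ⟨s', p1', hp1, hbad⟩ := hgs
    have ptripS := hpm.2 s' s m1 ⟨p1', mid' ++ t :: p2, by rw [hsp, hp1]; simp⟩
    have hadj_s's : G.Adj s' s :=
      adj_of_chain ch (X := p1') (Y := m1 :: (mid' ++ t :: p2)) (by rw [hsp, hp1]; simp)
    by_cases h1 : G.HeadAt s' s
    · by_cases h2 : G.HeadAt t s
      · by_cases h3 : G.HeadAt m1 s
        · exact (hbad ⟨fun _ => ptripS.1 ⟨h1, h3⟩, fun hn => absurd ⟨h1, h2⟩ hn⟩).elim
        · have hdsm : G.Dir s m1 := forced_dir hA hadj_sm1 h3 h1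
          have hsan : s ∈ G.anSet C := by
            rcases hIL m1 mid' rfl with hm | ⟨hmb, hpa, hco⟩
            · exact mem_anSet_of_dir_mem hdsm hm
            · exfalso
              obtain ⟨_, hsa⟩ := concat_inj hpa
              have hab : G.Dir a b := by rw [← hsa, ← hmb]; exact hdsm
              have hbc := hbl hab
              have hanc : G.Anc a c :=
                Relation.ReflTransGen.head hab (Relation.ReflTransGen.single hbc)
              rcases hco with hceq | hdca
              · injection hceq with u1 u2
                have h2' : G.HeadAt c a := by rw [← u1, ← hsa]; exact h2
                exact headAt_anc_absurd hA h2' hanc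
              · exact headAt_anc_absurd hA (dir_headAt hdca) hanc
          exact (hbad ⟨fun _ => hsan, fun hn => absurd ⟨h1, h2⟩ hn⟩).elim
      · by_cases h3 : G.HeadAt m1 s
        · by_cases h4 : s ∈ C
          · -- genuine failure: recurse, deleting s as well
            have hdst : G.Dir s t := forced_dir hA hadj h2 h1
            have hadj_s't : G.Adj s' t := by
              have h5 : s' ∈ G.Bd t := hB.2 s t hdst (mem_bd_of_adj (adj_symm hadj_s's))
              have hne : s' ≠ t := by
                refine ne_of_nodup_right (X := p1') (Y := s :: (m1 :: mid' ++ t :: p2))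
                  ?_ (by simp)
                rw [show p1' ++ s' :: s :: (m1 :: mid' ++ t :: p2)
                    = (p1' ++ [s']) ++ s :: (m1 :: mid' ++ t :: p2) by simp, ← hp1, ← hsp]
                exact nd
              exact adj_symm (adj_of_mem_bd h5 hne)
            refine IH (p1'.length + p2.length) (by rw [← hn, hp1]; simp) p1' s'
              (s :: m1 :: mid') t p2 rfl (by rw [hsp, hp1]; simp) (by simp) hadj_s't
              ?_ ?_
            · intro x xs hx
              have hx1 : x = s := by
                injection hx with u1 u2
                exact u1.symm
              exact Or.inl (hx1 ▸ h4)
            · intro ml hml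
              rw [List.getLast?_cons_cons] at hml
              rcases hIR ml hml with hm | ⟨hmb, hceq, hco⟩
              · exact Or.inl hm
              · refine Or.inr ⟨hmb, hceq, Or.inr ?_⟩
                rcases hco with hpa | hdac
                · obtain ⟨_, hsa⟩ := concat_inj hpa
                  injection hceq with u1 u2
                  rw [← hsa, ← u1]
                  exact hdst
                · exact hdac
          · exact (hbad ⟨fun hco => absurd hco.2 h2, fun _ => h4⟩).elim
        · have hnc : s ∉ C := ptripS.2 (fun hco => absurd hco.2 h3)
          exact (hbad ⟨fun hco => absurd hco.2 h2, fun _ => hnc⟩).elim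
    · exact (hbad ⟨fun hco => absurd hco.1 h1,
        fun _ => ptripS.2 (fun hco => absurd hco.1 h1)⟩).elim

end MixedGraph

end Aux

open MixedGraph in
/-- In an ancestral graph with the boundary containment
property, every non-endpoint vertex on a minimal-length m-connecting path
is a collider. -/
theorem stmt4 {V : Type} (G : MixedGraph V) (hA : G.Ancestral) (hB : G.BdContain)
    (v w : V) (C : Set V) (p : List V)
    (hp : G.IsMConnPath C p) (hh : p.head? = some v) (hl : p.getLast? = some w)
    (hmin : ∀ q, G.IsMConnPath C q → q.head? = some v → q.getLast? = some w →
      p.length ≤ q.length) :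
    ∀ a b c, ConsecTriple p a b c → G.Collider a b c := by
  intro a b c htrip
  by_contra hnc
  obtain ⟨l1, l2, hpeq⟩ := htrip
  obtain ⟨nd, ch⟩ := hp.1
  have hadj_ab : G.Adj a b := adj_of_chain ch (X := l1) (Y := c :: l2) hpeq
  have hadj_bc : G.Adj b c :=
    adj_of_chain ch (X := l1 ++ [a]) (Y := l2) (by rw [hpeq]; simp)
  have hbl : G.Dir a b → G.Dir b c := fun hd =>
    forced_dir hA hadj_bc (fun hcb => hnc ⟨dir_headAt hd, hcb⟩) (dir_headAt hd)
  have hbr : G.Dir c b → G.Dir b a := fun hd =>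
    forced_dir hA (adj_symm hadj_ab) (fun hab => hnc ⟨hab, dir_headAt hd⟩) (dir_headAt hd)
  have hac_ne : a ≠ c :=
    ne_of_nodup_right (X := l1) (Y := b :: c :: l2) (hpeq ▸ nd) (by simp)
  have hadj_ac : G.Adj a c := by
    rcases Classical.em (G.HeadAt a b) with h | h
    · have h2 : ¬ G.HeadAt c b := fun h2 => hnc ⟨h, h2⟩
      have hsub : G.Bd b ⊆ G.Bd c := bd_subset_of_not_headAt hB (adj_symm hadj_bc) h2
      have hm : a ∈ G.Bd c := hsub (mem_bd_of_adj (adj_symm hadj_ab))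
      exact adj_symm (adj_of_mem_bd hm hac_ne)
    · have hsub : G.Bd b ⊆ G.Bd a := bd_subset_of_not_headAt hB hadj_ab h
      have hm : c ∈ G.Bd a := hsub (mem_bd_of_adj hadj_bc)
      exact adj_of_mem_bd hm (Ne.symm hac_ne)
  obtain ⟨q, hq, hqh, hql, hqlen⟩ :=
    core hA hB hp hpeq hbl hbr (l1.length + l2.length) l1 a [b] c l2 rfl
      (by rw [hpeq]; simp) (by simp) hadj_ac
      (fun m1 mid' hm => by
        injection hm with u1 u2
        exact Or.inr ⟨u1.symm, rfl, Or.inl rfl⟩)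
      (fun ml hml => by
        have hu : ml = b := by
          simp only [List.getLast?_singleton, Option.some.injEq] at hml
          exact hml.symm
        exact Or.inr ⟨hu, rfl, Or.inl rfl⟩)
  have hle := hmin q hq (by rw [hqh, hh]) (by rw [hql, hl])
  omega
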